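/- Let G be a path on n vertices and let the instance of qubit routing have disjoint pairs (i.e., the token pairs varphi(s) for s in S are pairwise disjoint). For any token placement f, there exists a feasible swap sequence starting at f of length exactly value(f) = gap(f) - cross(f), where gap(f) = \sum_{s in S} (distance between positions of the two tokens of varphi(s) minus 1) and cross(f) is the number of pairs {s,s'} whose position intervals cross (interleave). -/

import Mathlib

/-- A single swap on the path with vertices `{0, …, n-1}` (edges `{i, i+1}`). -/
def AdjSwap {n : ℕ} {T : Type*} [DecidableEq T] (f g : Fin n ≃ T) : Prop :=
  ∃ i j : Fin n, (i : ℕ) + 1 = (j : ℕ) ∧ g = (Equiv.swap i j).trans f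

/-- `F 0 ~> F 1 ~> ⋯ ~> F l` is a swap sequence on the path. -/
def SwapSeq {n : ℕ} {T : Type*} [DecidableEq T] (l : ℕ) (F : ℕ → (Fin n ≃ T)) : Prop :=
  ∀ j, j < l → AdjSwap (F j) (F (j + 1))

/-- The gate pairs `{φ₁ s, φ₂ s}` (s ∈ S) are pairwise disjoint (and each is a genuine pair). -/
def DisjPairs {T S : Type*} (φ₁ φ₂ : S → T) : Prop :=
  (∀ s, φ₁ s ≠ φ₂ s) ∧
  ∀ s s', s ≠ s' →
    φ₁ s ≠ φ₁ s' ∧ φ₁ s ≠ φ₂ s' ∧ φ₂ s ≠ φ₁ s' ∧ φ₂ s ≠ φ₂ s'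

/-- The smaller of the two positions of the pair `φ s` under the placement `f`. -/
def pmin {n : ℕ} {T S : Type*} (φ₁ φ₂ : S → T) (f : Fin n ≃ T) (s : S) : ℕ :=
  min (f.symm (φ₁ s) : ℕ) (f.symm (φ₂ s) : ℕ)

/-- The larger of the two positions of the pair `φ s` under the placement `f`. -/
def pmax {n : ℕ} {T S : Type*} (φ₁ φ₂ : S → T) (f : Fin n ≃ T) (s : S) : ℕ :=
  max (f.symm (φ₁ s) : ℕ) (f.symm (φ₂ s) : ℕ)

/-- `gap f = ∑ₛ (distance between the positions of the two tokens of φ s, minus 1)`. -/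
def gapZ {n : ℕ} {T S : Type*} [Fintype S] (φ₁ φ₂ : S → T) (f : Fin n ≃ T) : ℤ :=
  ∑ s : S, ((pmax φ₁ φ₂ f s : ℤ) - (pmin φ₁ φ₂ f s : ℤ) - 1)

/-- `cross f` = number of (unordered) pairs `{s, s'}` whose position intervals interleave;
each such pair is counted exactly once, oriented so that `s` has the smaller left endpoint. -/
def crossZ {n : ℕ} {T S : Type*} [Fintype S] (φ₁ φ₂ : S → T) (f : Fin n ≃ T) : ℤ :=
  (((Finset.univ ×ˢ Finset.univ : Finset (S × S)).filter fun p =>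
      pmin φ₁ φ₂ f p.1 < pmin φ₁ φ₂ f p.2 ∧
      pmin φ₁ φ₂ f p.2 < pmax φ₁ φ₂ f p.1 ∧
      pmax φ₁ φ₂ f p.1 < pmax φ₁ φ₂ f p.2).card : ℤ)

/-- `value f = gap f - cross f`. -/
def valueZ {n : ℕ} {T S : Type*} [Fintype S] (φ₁ φ₂ : S → T) (f : Fin n ≃ T) : ℤ :=
  gapZ φ₁ φ₂ f - crossZ φ₁ φ₂ f

/-- A swap sequence is feasible if for every `s ∈ S` some placement in the sequence puts
the two tokens of `φ s` on adjacent vertices of the path (order constraints are vacuous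
for disjoint pairs). -/
def Feasible {n : ℕ} {T S : Type*} [DecidableEq T] (φ₁ φ₂ : S → T) (l : ℕ)
    (F : ℕ → (Fin n ≃ T)) : Prop :=
  ∀ s : S, ∃ j ≤ l, Nat.dist ((F j).symm (φ₁ s) : ℕ) ((F j).symm (φ₂ s) : ℕ) = 1

set_option linter.unusedSectionVars false

/-- abstract gap -/
def gapS {S : Type*} [Fintype S] (A B : S → ℕ) : ℤ :=
  ∑ s : S, ((B s : ℤ) - (A s : ℤ) - 1)

/-- abstract cross -/
def crossS {S : Type*} [Fintype S] (A B : S → ℕ) : ℤ :=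
  (((Finset.univ ×ˢ Finset.univ : Finset (S × S)).filter fun p =>
      A p.1 < A p.2 ∧ A p.2 < B p.1 ∧ B p.1 < B p.2).card : ℤ)

section Abstract
variable {S : Type*} [Fintype S]

/-- The swap touches only the pair `s`; gap decreases by 1, cross is unchanged. -/
lemma step_one (A B A' B' : S → ℕ) (s : S) {a b : ℕ}
    (hab : a + 2 ≤ b)
    (hAs : A s = a) (hBs : B s = b) (hA's : A' s = a) (hB's : B' s = b - 1)
    (hoth : ∀ u : S, u ≠ s → A' u = A u ∧ B' u = B u ∧
        A u ≠ b - 1 ∧ A u ≠ b ∧ B u ≠ b - 1 ∧ B u ≠ b) :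
    gapS A' B' = gapS A B - 1 ∧ crossS A' B' = crossS A B := by
  classical
  constructor
  · have hz : ∀ u ∈ (Finset.univ : Finset S), u ∉ ({s} : Finset S) →
        (((B' u : ℤ) - A' u - 1) - ((B u : ℤ) - A u - 1)) = 0 := by
      intro u _ hu
      rw [Finset.mem_singleton] at hu
      obtain ⟨h1, h2, -⟩ := hoth u hu
      omega
    have hd : gapS A' B' - gapS A B = ((B' s : ℤ) - A' s - 1) - ((B s : ℤ) - A s - 1) := by
      unfold gapS
      rw [← Finset.sum_sub_distrib,
        ← Finset.sum_subset (Finset.subset_univ ({s} : Finset S)) hz,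
        Finset.sum_singleton]
    omega
  · unfold crossS
    congr 1
    apply congrArg
    apply Finset.filter_congr
    intro p _
    obtain ⟨u, v⟩ := p
    simp only
    by_cases hu : u = s
    · rw [hu]
      by_cases hv : v = s
      · rw [hv]; omega
      · have h := hoth v hv; omega
    · have h := hoth u hu
      by_cases hv : v = s
      · rw [hv]; omega
      · have h' := hoth v hv; omega

/-- The swap touches pairs `s` and `u0`; `value = gap - cross` decreases by exactly 1. -/
lemma step_two (A B A' B' : S → ℕ) (s u0 : S) (hsu : u0 ≠ s) {a b q : ℕ}
    (hab : a + 2 ≤ b) (hqa : a < q) (hq2 : q ≠ b - 1) (hq3 : q ≠ b)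
    (hAs : A s = a) (hBs : B s = b) (hA's : A' s = a) (hB's : B' s = b - 1)
    (hAu : A u0 = min q (b - 1)) (hBu : B u0 = max q (b - 1))
    (hA'u : A' u0 = min q b) (hB'u : B' u0 = max q b)
    (hoth : ∀ u : S, u ≠ s → u ≠ u0 → A' u = A u ∧ B' u = B u ∧
        A u ≠ b - 1 ∧ A u ≠ b ∧ B u ≠ b - 1 ∧ B u ≠ b) :
    (gapS A' B' - crossS A' B') = (gapS A B - crossS A B) - 1 ∧ gapS A' B' ≤ gapS A B := by
  classical
  have h3iff : ∀ u v : S, (u ≠ s ∨ v ≠ u0) →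
      ((A' u < A' v ∧ A' v < B' u ∧ B' u < B' v) ↔
       (A u < A v ∧ A v < B u ∧ B u < B v)) := by
    intro u v hp
    by_cases hu : u = s
    · rw [hu]
      by_cases hv : v = s
      · rw [hv]; omega
      · by_cases hv' : v = u0
        · rcases hp with h | h
          · exact absurd hu h
          · exact absurd hv' h
        · have ho := hoth v hv hv'; omega
    · by_cases hu' : u = u0
      · rw [hu']
        by_cases hv : v = s
        · rw [hv]; omega
        · by_cases hv' : v = u0
          · rw [hv']; omega
          · have ho := hoth v hv hv'; omega
      · have hou := hoth u hu hu'
        by_cases hv : v = s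
        · rw [hv]; omega
        · by_cases hv' : v = u0
          · rw [hv']; omega
          · have hov := hoth v hv hv'; omega
  have hgapdiff : gapS A' B' - gapS A B =
      (((B' s : ℤ) - A' s - 1) - ((B s : ℤ) - A s - 1)) +
      (((B' u0 : ℤ) - A' u0 - 1) - ((B u0 : ℤ) - A u0 - 1)) := by
    have hz : ∀ u ∈ (Finset.univ : Finset S), u ∉ ({s, u0} : Finset S) →
        (((B' u : ℤ) - A' u - 1) - ((B u : ℤ) - A u - 1)) = 0 := by
      intro u _ hu
      simp only [Finset.mem_insert, Finset.mem_singleton, not_or] at hu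
      obtain ⟨h1, h2, -⟩ := hoth u hu.1 hu.2
      omega
    unfold gapS
    rw [← Finset.sum_sub_distrib,
      ← Finset.sum_subset (Finset.subset_univ ({s, u0} : Finset S)) hz,
      Finset.sum_pair (show s ≠ u0 from fun h => hsu h.symm)]
  rcases (show q < b - 1 ∨ b < q by omega) with hsmall | hbig
  · -- nested becomes crossing: gap unchanged, cross increases by 1
    have hPg : A' s < A' u0 ∧ A' u0 < B' s ∧ B' s < B' u0 := by omega
    have hPf : ¬(A s < A u0 ∧ A u0 < B s ∧ B s < B u0) := by omega
    have hnm : ((s, u0) : S × S) ∉ (Finset.univ ×ˢ Finset.univ : Finset (S × S)).filter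
        (fun p => A p.1 < A p.2 ∧ A p.2 < B p.1 ∧ B p.1 < B p.2) := by
      rw [Finset.mem_filter]
      rintro ⟨-, h⟩
      exact hPf h
    have hfeq : (Finset.univ ×ˢ Finset.univ : Finset (S × S)).filter
        (fun p => A' p.1 < A' p.2 ∧ A' p.2 < B' p.1 ∧ B' p.1 < B' p.2) =
        insert ((s, u0) : S × S) ((Finset.univ ×ˢ Finset.univ : Finset (S × S)).filter
        (fun p => A p.1 < A p.2 ∧ A p.2 < B p.1 ∧ B p.1 < B p.2)) := by
      ext p
      by_cases hp : p = ((s, u0) : S × S)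
      · subst hp
        have hmem : ((s, u0) : S × S) ∈ (Finset.univ ×ˢ Finset.univ : Finset (S × S)) :=
          Finset.mem_product.mpr ⟨Finset.mem_univ _, Finset.mem_univ _⟩
        rw [Finset.mem_filter, Finset.mem_insert]
        exact iff_of_true ⟨hmem, hPg⟩ (Or.inl rfl)
      · have hp' : p.1 ≠ s ∨ p.2 ≠ u0 := by
          by_contra hc
          push_neg at hc
          exact hp (Prod.ext hc.1 hc.2)
        simp only [Finset.mem_insert, Finset.mem_filter, Finset.mem_product,
          Finset.mem_univ, true_and, hp, false_or]
        exact h3iff p.1 p.2 hp'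
    have hcross' : crossS A' B' = crossS A B + 1 := by
      unfold crossS
      rw [hfeq, Finset.card_insert_of_notMem hnm]
      push_cast
      ring
    constructor <;> omega
  · -- crossing becomes separated: gap decreases by 2, cross decreases by 1
    have hPf : A s < A u0 ∧ A u0 < B s ∧ B s < B u0 := by omega
    have hPg : ¬(A' s < A' u0 ∧ A' u0 < B' s ∧ B' s < B' u0) := by omega
    have hnm : ((s, u0) : S × S) ∉ (Finset.univ ×ˢ Finset.univ : Finset (S × S)).filter
        (fun p => A' p.1 < A' p.2 ∧ A' p.2 < B' p.1 ∧ B' p.1 < B' p.2) := by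
      rw [Finset.mem_filter]
      rintro ⟨-, h⟩
      exact hPg h
    have hfeq : (Finset.univ ×ˢ Finset.univ : Finset (S × S)).filter
        (fun p => A p.1 < A p.2 ∧ A p.2 < B p.1 ∧ B p.1 < B p.2) =
        insert ((s, u0) : S × S) ((Finset.univ ×ˢ Finset.univ : Finset (S × S)).filter
        (fun p => A' p.1 < A' p.2 ∧ A' p.2 < B' p.1 ∧ B' p.1 < B' p.2)) := by
      ext p
      by_cases hp : p = ((s, u0) : S × S)
      · subst hp
        have hmem : ((s, u0) : S × S) ∈ (Finset.univ ×ˢ Finset.univ : Finset (S × S)) :=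
          Finset.mem_product.mpr ⟨Finset.mem_univ _, Finset.mem_univ _⟩
        rw [Finset.mem_filter, Finset.mem_insert]
        exact iff_of_true ⟨hmem, hPf⟩ (Or.inl rfl)
      · have hp' : p.1 ≠ s ∨ p.2 ≠ u0 := by
          by_contra hc
          push_neg at hc
          exact hp (Prod.ext hc.1 hc.2)
        simp only [Finset.mem_insert, Finset.mem_filter, Finset.mem_product,
          Finset.mem_univ, true_and, hp, false_or]
        exact (h3iff p.1 p.2 hp').symm
    have hcross' : crossS A B = crossS A' B' + 1 := by
      unfold crossS
      rw [hfeq, Finset.card_insert_of_notMem hnm]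
      push_cast
      ring
    constructor <;> omega

end Abstract

section Step
variable {n : ℕ} {T S : Type*} [DecidableEq T] [Fintype S] {φ₁ φ₂ : S → T}

lemma hinj_aux (f : Fin n ≃ T) : ∀ t t' : T, (f.symm t : ℕ) = (f.symm t' : ℕ) → t = t' := by
  intro t t' h
  exact f.symm.injective (Fin.val_injective h)

lemma swap_symm_val (f : Fin n ≃ T) (i j : Fin n) (t : T) :
    ((((Equiv.swap i j).trans f).symm t : ℕ)) =
      if (f.symm t : ℕ) = (i : ℕ) then (j : ℕ) else
      if (f.symm t : ℕ) = (j : ℕ) then (i : ℕ) else (f.symm t : ℕ) := by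
  have h1 : ((Equiv.swap i j).trans f).symm t = Equiv.swap i j (f.symm t) := by
    simp [Equiv.symm_trans_apply]
  rw [h1, Equiv.swap_apply_def]
  by_cases hc1 : (f.symm t : ℕ) = (i : ℕ)
  · rw [if_pos (Fin.ext hc1), if_pos hc1]
  · rw [if_neg (fun h => hc1 (congrArg Fin.val h)), if_neg hc1]
    by_cases hc2 : (f.symm t : ℕ) = (j : ℕ)
    · rw [if_pos (Fin.ext hc2), if_pos hc2]
    · rw [if_neg (fun h => hc2 (congrArg Fin.val h)), if_neg hc2]

lemma exists_step (hdisj : DisjPairs φ₁ φ₂) (f : Fin n ≃ T)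
    (hgap : 0 < gapZ φ₁ φ₂ f) :
    ∃ g : Fin n ≃ T, AdjSwap f g ∧
      valueZ φ₁ φ₂ g = valueZ φ₁ φ₂ f - 1 ∧ gapZ φ₁ φ₂ g ≤ gapZ φ₁ φ₂ f := by
  classical
  have hpminf : ∀ u : S, pmin φ₁ φ₂ f u = min ((f.symm (φ₁ u)) : ℕ) ((f.symm (φ₂ u)) : ℕ) :=
    fun _ => rfl
  have hpmaxf : ∀ u : S, pmax φ₁ φ₂ f u = max ((f.symm (φ₁ u)) : ℕ) ((f.symm (φ₂ u)) : ℕ) :=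
    fun _ => rfl
  have hne : ∀ u : S, ((f.symm (φ₁ u)) : ℕ) ≠ ((f.symm (φ₂ u)) : ℕ) :=
    fun u h => hdisj.1 u (hinj_aux f _ _ h)
  have hdist : ∀ u v : S, u ≠ v →
      ((f.symm (φ₁ u)) : ℕ) ≠ ((f.symm (φ₁ v)) : ℕ) ∧
      ((f.symm (φ₁ u)) : ℕ) ≠ ((f.symm (φ₂ v)) : ℕ) ∧
      ((f.symm (φ₂ u)) : ℕ) ≠ ((f.symm (φ₁ v)) : ℕ) ∧
      ((f.symm (φ₂ u)) : ℕ) ≠ ((f.symm (φ₂ v)) : ℕ) := by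
    intro u v huv
    obtain ⟨d1, d2, d3, d4⟩ := hdisj.2 u v huv
    exact ⟨fun h => d1 (hinj_aux f _ _ h), fun h => d2 (hinj_aux f _ _ h),
      fun h => d3 (hinj_aux f _ _ h), fun h => d4 (hinj_aux f _ _ h)⟩
  obtain ⟨s0, hs0⟩ : ∃ u : S, pmin φ₁ φ₂ f u + 2 ≤ pmax φ₁ φ₂ f u := by
    by_contra hcon
    push_neg at hcon
    have hle : gapZ φ₁ φ₂ f ≤ 0 :=
      Finset.sum_nonpos (fun u _ => by have := hcon u; omega)
    omega
  obtain ⟨s, hsmem, hsmin⟩ := Finset.exists_min_image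
    (Finset.univ.filter (fun u : S => pmin φ₁ φ₂ f u + 2 ≤ pmax φ₁ φ₂ f u)) (pmin φ₁ φ₂ f)
    ⟨s0, Finset.mem_filter.mpr ⟨Finset.mem_univ s0, hs0⟩⟩
  have hs : pmin φ₁ φ₂ f s + 2 ≤ pmax φ₁ φ₂ f s := (Finset.mem_filter.mp hsmem).2
  have hmin : ∀ u : S, pmin φ₁ φ₂ f u + 2 ≤ pmax φ₁ φ₂ f u →
      pmin φ₁ φ₂ f s ≤ pmin φ₁ φ₂ f u :=
    fun u hu => hsmin u (Finset.mem_filter.mpr ⟨Finset.mem_univ u, hu⟩)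
  obtain ⟨a, hadef⟩ : ∃ a : ℕ, pmin φ₁ φ₂ f s = a := ⟨_, rfl⟩
  obtain ⟨b, hbdef⟩ : ∃ b : ℕ, pmax φ₁ φ₂ f s = b := ⟨_, rfl⟩
  have hab : a + 2 ≤ b := by omega
  have hbn : b < n := by
    have h1 : ((f.symm (φ₁ s)) : ℕ) < n := (f.symm (φ₁ s)).isLt
    have h2 : ((f.symm (φ₂ s)) : ℕ) < n := (f.symm (φ₂ s)).isLt
    have h3 := hpmaxf s
    omega
  have hb1n : b - 1 < n := by omega
  obtain ⟨g, hgdef⟩ : ∃ g : Fin n ≃ T,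
      g = (Equiv.swap (⟨b - 1, hb1n⟩ : Fin n) (⟨b, hbn⟩ : Fin n)).trans f := ⟨_, rfl⟩
  have hadj : AdjSwap f g := ⟨⟨b - 1, hb1n⟩, ⟨b, hbn⟩, by show b - 1 + 1 = b; omega, hgdef⟩
  have hgsymm : ∀ t : T, (g.symm t : ℕ) =
      if (f.symm t : ℕ) = b - 1 then b else
      if (f.symm t : ℕ) = b then b - 1 else (f.symm t : ℕ) := by
    intro t
    rw [hgdef, swap_symm_val f (⟨b - 1, hb1n⟩ : Fin n) (⟨b, hbn⟩ : Fin n) t]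
  -- helpers for evaluating the if-expression
  have hswne : ∀ x : ℕ, x ≠ b - 1 → x ≠ b →
      (if x = b - 1 then b else if x = b then b - 1 else x) = x := by
    intro x h1 h2
    rw [if_neg h1, if_neg h2]
  have hswb : (if b = b - 1 then b else if b = b then b - 1 else b) = b - 1 := by
    rw [if_neg (by omega), if_pos rfl]
  have hswb1 : (if b - 1 = b - 1 then b else if b - 1 = b then b - 1 else b - 1) = b := by
    rw [if_pos rfl]
  have hpming : ∀ u : S, pmin φ₁ φ₂ g u =
      min (if ((f.symm (φ₁ u)) : ℕ) = b - 1 then b else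
           if ((f.symm (φ₁ u)) : ℕ) = b then b - 1 else ((f.symm (φ₁ u)) : ℕ))
          (if ((f.symm (φ₂ u)) : ℕ) = b - 1 then b else
           if ((f.symm (φ₂ u)) : ℕ) = b then b - 1 else ((f.symm (φ₂ u)) : ℕ)) := by
    intro u
    unfold pmin
    rw [hgsymm, hgsymm]
  have hpmaxg : ∀ u : S, pmax φ₁ φ₂ g u =
      max (if ((f.symm (φ₁ u)) : ℕ) = b - 1 then b else
           if ((f.symm (φ₁ u)) : ℕ) = b then b - 1 else ((f.symm (φ₁ u)) : ℕ))
          (if ((f.symm (φ₂ u)) : ℕ) = b - 1 then b else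
           if ((f.symm (φ₂ u)) : ℕ) = b then b - 1 else ((f.symm (φ₂ u)) : ℕ)) := by
    intro u
    unfold pmax
    rw [hgsymm, hgsymm]
  have hEs : (((f.symm (φ₁ s)) : ℕ) = a ∧ ((f.symm (φ₂ s)) : ℕ) = b) ∨
      (((f.symm (φ₁ s)) : ℕ) = b ∧ ((f.symm (φ₂ s)) : ℕ) = a) := by
    have h1 := hpminf s
    have h2 := hpmaxf s
    have h3 := hne s
    omega
  have hgs : pmin φ₁ φ₂ g s = a ∧ pmax φ₁ φ₂ g s = b - 1 := by
    have h1 := hpming s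
    have h2 := hpmaxg s
    rcases hEs with ⟨he1, he2⟩ | ⟨he1, he2⟩
    · rw [he1, he2, hswne a (by omega) (by omega), hswb] at h1 h2
      omega
    · rw [he1, he2, hswne a (by omega) (by omega), hswb] at h1 h2
      omega
  have huntouch : ∀ u : S, u ≠ s → ((f.symm (φ₁ u)) : ℕ) ≠ b - 1 →
      ((f.symm (φ₂ u)) : ℕ) ≠ b - 1 →
      (pmin φ₁ φ₂ g u = pmin φ₁ φ₂ f u ∧ pmax φ₁ φ₂ g u = pmax φ₁ φ₂ f u) ∧
      (pmin φ₁ φ₂ f u ≠ b - 1 ∧ pmin φ₁ φ₂ f u ≠ b ∧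
       pmax φ₁ φ₂ f u ≠ b - 1 ∧ pmax φ₁ φ₂ f u ≠ b) := by
    intro u hu hb1 hb2
    obtain ⟨d1, d2, d3, d4⟩ := hdist u s hu
    have he1b : ((f.symm (φ₁ u)) : ℕ) ≠ b := by rcases hEs with ⟨g1, g2⟩ | ⟨g1, g2⟩ <;> omega
    have he2b : ((f.symm (φ₂ u)) : ℕ) ≠ b := by rcases hEs with ⟨g1, g2⟩ | ⟨g1, g2⟩ <;> omega
    have h1 := hpming u
    have h2 := hpmaxg u
    rw [hswne _ hb1 he1b, hswne _ hb2 he2b] at h1 h2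
    have h3 := hpminf u
    have h4 := hpmaxf u
    constructor
    · constructor <;> omega
    · omega
  by_cases hex : ∃ u : S, ((f.symm (φ₁ u)) : ℕ) = b - 1 ∨ ((f.symm (φ₂ u)) : ℕ) = b - 1
  · -- some pair u0 owns position b - 1
    obtain ⟨u0, hu0⟩ := hex
    have hu0s : u0 ≠ s := by
      intro h
      rw [h] at hu0
      rcases hEs with ⟨g1, g2⟩ | ⟨g1, g2⟩ <;> omega
    obtain ⟨q, hq1, hq2⟩ : ∃ q : ℕ,
        ((((f.symm (φ₁ u0)) : ℕ) = b - 1 ∧ ((f.symm (φ₂ u0)) : ℕ) = q) ∨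
         (((f.symm (φ₁ u0)) : ℕ) = q ∧ ((f.symm (φ₂ u0)) : ℕ) = b - 1)) ∧ q ≠ b - 1 := by
      rcases hu0 with h | h
      · refine ⟨((f.symm (φ₂ u0)) : ℕ), Or.inl ⟨h, rfl⟩, ?_⟩
        have := hne u0; omega
      · refine ⟨((f.symm (φ₁ u0)) : ℕ), Or.inr ⟨rfl, h⟩, ?_⟩
        have := hne u0; omega
    obtain ⟨e1, e2, e3, e4⟩ := hdist u0 s hu0s
    have hqb : q ≠ b := by
      rcases hEs with ⟨g1, g2⟩ | ⟨g1, g2⟩ <;> rcases hq1 with ⟨k1, k2⟩ | ⟨k1, k2⟩ <;> omega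
    have hqa : q ≠ a := by
      rcases hEs with ⟨g1, g2⟩ | ⟨g1, g2⟩ <;> rcases hq1 with ⟨k1, k2⟩ | ⟨k1, k2⟩ <;> omega
    have hu0f : pmin φ₁ φ₂ f u0 = min q (b - 1) ∧ pmax φ₁ φ₂ f u0 = max q (b - 1) := by
      have h3 := hpminf u0
      have h4 := hpmaxf u0
      rcases hq1 with ⟨k1, k2⟩ | ⟨k1, k2⟩ <;> constructor <;> omega
    have hqgta : a < q := by
      rcases Nat.lt_or_ge a q with h | h
      · exact h
      · exfalso
        have hu2 : pmin φ₁ φ₂ f u0 + 2 ≤ pmax φ₁ φ₂ f u0 := by omega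
        have := hmin u0 hu2
        omega
    have hu0g : pmin φ₁ φ₂ g u0 = min q b ∧ pmax φ₁ φ₂ g u0 = max q b := by
      have h1 := hpming u0
      have h2 := hpmaxg u0
      rcases hq1 with ⟨k1, k2⟩ | ⟨k1, k2⟩
      · rw [k1, k2, hswb1, hswne q hq2 hqb] at h1 h2
        omega
      · rw [k1, k2, hswb1, hswne q hq2 hqb] at h1 h2
        omega
    have hoth : ∀ u : S, u ≠ s → u ≠ u0 →
        pmin φ₁ φ₂ g u = pmin φ₁ φ₂ f u ∧ pmax φ₁ φ₂ g u = pmax φ₁ φ₂ f u ∧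
        pmin φ₁ φ₂ f u ≠ b - 1 ∧ pmin φ₁ φ₂ f u ≠ b ∧
        pmax φ₁ φ₂ f u ≠ b - 1 ∧ pmax φ₁ φ₂ f u ≠ b := by
      intro u hus hu0'
      obtain ⟨c1, c2, c3, c4⟩ := hdist u u0 hu0'
      have hbu1 : ((f.symm (φ₁ u)) : ℕ) ≠ b - 1 := by
        rcases hq1 with ⟨k1, k2⟩ | ⟨k1, k2⟩ <;> omega
      have hbu2 : ((f.symm (φ₂ u)) : ℕ) ≠ b - 1 := by
        rcases hq1 with ⟨k1, k2⟩ | ⟨k1, k2⟩ <;> omega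
      obtain ⟨⟨w1, w2⟩, w3, w4, w5, w6⟩ := huntouch u hus hbu1 hbu2
      exact ⟨w1, w2, w3, w4, w5, w6⟩
    obtain ⟨hval2, hgap2⟩ := step_two (pmin φ₁ φ₂ f) (pmax φ₁ φ₂ f)
      (pmin φ₁ φ₂ g) (pmax φ₁ φ₂ g) s u0 hu0s hab hqgta hq2 hqb
      hadef hbdef hgs.1 hgs.2 hu0f.1 hu0f.2 hu0g.1 hu0g.2 hoth
    have r1 : gapZ φ₁ φ₂ g = gapS (pmin φ₁ φ₂ g) (pmax φ₁ φ₂ g) := rfl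
    have r2 : crossZ φ₁ φ₂ g = crossS (pmin φ₁ φ₂ g) (pmax φ₁ φ₂ g) := rfl
    have r3 : gapZ φ₁ φ₂ f = gapS (pmin φ₁ φ₂ f) (pmax φ₁ φ₂ f) := rfl
    have r4 : crossZ φ₁ φ₂ f = crossS (pmin φ₁ φ₂ f) (pmax φ₁ φ₂ f) := rfl
    refine ⟨g, hadj, ?_, ?_⟩
    · unfold valueZ
      omega
    · omega
  · -- no pair owns position b - 1
    push_neg at hex
    have hoth : ∀ u : S, u ≠ s →
        pmin φ₁ φ₂ g u = pmin φ₁ φ₂ f u ∧ pmax φ₁ φ₂ g u = pmax φ₁ φ₂ f u ∧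
        pmin φ₁ φ₂ f u ≠ b - 1 ∧ pmin φ₁ φ₂ f u ≠ b ∧
        pmax φ₁ φ₂ f u ≠ b - 1 ∧ pmax φ₁ φ₂ f u ≠ b := by
      intro u hus
      obtain ⟨⟨w1, w2⟩, w3, w4, w5, w6⟩ := huntouch u hus (hex u).1 (hex u).2
      exact ⟨w1, w2, w3, w4, w5, w6⟩
    obtain ⟨hgap1, hcross1⟩ := step_one (pmin φ₁ φ₂ f) (pmax φ₁ φ₂ f)
      (pmin φ₁ φ₂ g) (pmax φ₁ φ₂ g) s hab hadef hbdef hgs.1 hgs.2 hoth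
    have r1 : gapZ φ₁ φ₂ g = gapS (pmin φ₁ φ₂ g) (pmax φ₁ φ₂ g) := rfl
    have r2 : crossZ φ₁ φ₂ g = crossS (pmin φ₁ φ₂ g) (pmax φ₁ φ₂ g) := rfl
    have r3 : gapZ φ₁ φ₂ f = gapS (pmin φ₁ φ₂ f) (pmax φ₁ φ₂ f) := rfl
    have r4 : crossZ φ₁ φ₂ f = crossS (pmin φ₁ φ₂ f) (pmax φ₁ φ₂ f) := rfl
    refine ⟨g, hadj, ?_, ?_⟩
    · unfold valueZ
      omega
    · omega

end Step

section Main
variable {n : ℕ} {T S : Type*} [DecidableEq T] [Fintype S] {φ₁ φ₂ : S → T}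


lemma pmin_lt_pmax (hdisj : DisjPairs φ₁ φ₂) (f : Fin n ≃ T) (s : S) :
    pmin φ₁ φ₂ f s < pmax φ₁ φ₂ f s := by
  have h : (f.symm (φ₁ s) : ℕ) ≠ (f.symm (φ₂ s) : ℕ) :=
    fun h => hdisj.1 s (hinj_aux f _ _ h)
  unfold pmin pmax
  omega

lemma pmin_inj (hdisj : DisjPairs φ₁ φ₂) (f : Fin n ≃ T) {u v : S}
    (h : pmin φ₁ φ₂ f u = pmin φ₁ φ₂ f v) : u = v := by
  by_contra huv
  obtain ⟨d1, d2, d3, d4⟩ := hdisj.2 u v huv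
  have h1 : (f.symm (φ₁ u) : ℕ) ≠ (f.symm (φ₁ v) : ℕ) := fun h => d1 (hinj_aux f _ _ h)
  have h2 : (f.symm (φ₁ u) : ℕ) ≠ (f.symm (φ₂ v) : ℕ) := fun h => d2 (hinj_aux f _ _ h)
  have h3 : (f.symm (φ₂ u) : ℕ) ≠ (f.symm (φ₁ v) : ℕ) := fun h => d3 (hinj_aux f _ _ h)
  have h4 : (f.symm (φ₂ u) : ℕ) ≠ (f.symm (φ₂ v) : ℕ) := fun h => d4 (hinj_aux f _ _ h)
  unfold pmin at h
  omega

lemma crossZ_nonneg (f : Fin n ≃ T) : 0 ≤ crossZ φ₁ φ₂ f := Int.natCast_nonneg _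

lemma gapZ_nonneg (hdisj : DisjPairs φ₁ φ₂) (f : Fin n ≃ T) : 0 ≤ gapZ φ₁ φ₂ f := by
  apply Finset.sum_nonneg
  intro s _
  have := pmin_lt_pmax hdisj f s
  omega

lemma crossZ_le_gapZ (hdisj : DisjPairs φ₁ φ₂) (f : Fin n ≃ T) :
    crossZ φ₁ φ₂ f ≤ gapZ φ₁ φ₂ f := by
  classical
  have hcard : ((Finset.univ ×ˢ Finset.univ : Finset (S × S)).filter fun p =>
      pmin φ₁ φ₂ f p.1 < pmin φ₁ φ₂ f p.2 ∧
      pmin φ₁ φ₂ f p.2 < pmax φ₁ φ₂ f p.1 ∧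
      pmax φ₁ φ₂ f p.1 < pmax φ₁ φ₂ f p.2).card ≤
      (Finset.univ.sigma (fun u : S => Finset.Ioo (pmin φ₁ φ₂ f u) (pmax φ₁ φ₂ f u))).card := by
    apply Finset.card_le_card_of_injOn (fun p => ⟨p.1, pmin φ₁ φ₂ f p.2⟩)
    · intro p hp
      rw [Finset.mem_coe, Finset.mem_filter] at hp
      obtain ⟨-, h1, h2, h3⟩ := hp
      simp only [Finset.mem_coe, Finset.mem_sigma, Finset.mem_univ, Finset.mem_Ioo, true_and]
      exact ⟨h1, h2⟩
    · intro p hp p' hp' h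
      have h1 : p.1 = p'.1 := congrArg Sigma.fst h
      have h2' : pmin φ₁ φ₂ f p.2 = pmin φ₁ φ₂ f p'.2 :=
        congrArg (Sigma.snd (β := fun _ : S => ℕ)) h
      exact Prod.ext h1 (pmin_inj hdisj f h2')
  have hsig : (Finset.univ.sigma (fun u : S => Finset.Ioo (pmin φ₁ φ₂ f u) (pmax φ₁ φ₂ f u))).card
      = ∑ u : S, (pmax φ₁ φ₂ f u - pmin φ₁ φ₂ f u - 1) := by
    rw [Finset.card_sigma]
    exact Finset.sum_congr rfl fun u _ => Nat.card_Ioo _ _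
  have h1 : crossZ φ₁ φ₂ f ≤ ((Finset.univ.sigma
      (fun u : S => Finset.Ioo (pmin φ₁ φ₂ f u) (pmax φ₁ φ₂ f u))).card : ℤ) := by
    unfold crossZ
    exact_mod_cast hcard
  have h2 : gapZ φ₁ φ₂ f = ((Finset.univ.sigma
      (fun u : S => Finset.Ioo (pmin φ₁ φ₂ f u) (pmax φ₁ φ₂ f u))).card : ℤ) := by
    rw [hsig]
    unfold gapZ
    rw [Nat.cast_sum]
    apply Finset.sum_congr rfl
    intro u _
    have := pmin_lt_pmax hdisj f u
    omega
  omega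

lemma base_case (hdisj : DisjPairs φ₁ φ₂) (f : Fin n ≃ T) (h0 : gapZ φ₁ φ₂ f = 0) :
    ∃ (l : ℕ) (F : ℕ → (Fin n ≃ T)),
      SwapSeq l F ∧ F 0 = f ∧ Feasible φ₁ φ₂ l F ∧ (l : ℤ) = valueZ φ₁ φ₂ f := by
  refine ⟨0, fun _ => f, ?_, rfl, ?_, ?_⟩
  · intro j hj
    omega
  · intro s
    refine ⟨0, le_refl 0, ?_⟩
    have hterm : (pmax φ₁ φ₂ f s : ℤ) - pmin φ₁ φ₂ f s - 1 = 0 := by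
      have hnn : ∀ u ∈ (Finset.univ : Finset S),
          0 ≤ (pmax φ₁ φ₂ f u : ℤ) - pmin φ₁ φ₂ f u - 1 := by
        intro u _
        have := pmin_lt_pmax hdisj f u
        omega
      unfold gapZ at h0
      exact (Finset.sum_eq_zero_iff_of_nonneg hnn).mp h0 s (Finset.mem_univ s)
    show Nat.dist ((f.symm (φ₁ s)) : ℕ) ((f.symm (φ₂ s)) : ℕ) = 1
    have h1 : pmin φ₁ φ₂ f s = min ((f.symm (φ₁ s)) : ℕ) ((f.symm (φ₂ s)) : ℕ) := rfl
    have h2 : pmax φ₁ φ₂ f s = max ((f.symm (φ₁ s)) : ℕ) ((f.symm (φ₂ s)) : ℕ) := rfl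
    unfold Nat.dist
    omega
  · have hc1 := crossZ_nonneg (φ₁ := φ₁) (φ₂ := φ₂) f
    have hc2 := crossZ_le_gapZ hdisj f
    unfold valueZ
    omega

lemma main_aux (hdisj : DisjPairs φ₁ φ₂) :
    ∀ N : ℕ, ∀ f : Fin n ≃ T, (gapZ φ₁ φ₂ f + valueZ φ₁ φ₂ f).toNat ≤ N →
    ∃ (l : ℕ) (F : ℕ → (Fin n ≃ T)),
      SwapSeq l F ∧ F 0 = f ∧ Feasible φ₁ φ₂ l F ∧ (l : ℤ) = valueZ φ₁ φ₂ f := by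
  intro N
  induction N with
  | zero =>
    intro f hf
    apply base_case hdisj
    have h1 := gapZ_nonneg hdisj f
    have h2 := crossZ_le_gapZ hdisj f
    have h3 : valueZ φ₁ φ₂ f = gapZ φ₁ φ₂ f - crossZ φ₁ φ₂ f := rfl
    omega
  | succ N ih =>
    intro f hf
    by_cases h0 : gapZ φ₁ φ₂ f = 0
    · exact base_case hdisj f h0
    · have h1 := gapZ_nonneg hdisj f
      have hpos : 0 < gapZ φ₁ φ₂ f := by omega
      obtain ⟨g, hadj, hval, hgle⟩ := exists_step hdisj f hpos
      have hmg : (gapZ φ₁ φ₂ g + valueZ φ₁ φ₂ g).toNat ≤ N := by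
        have h2 := crossZ_le_gapZ hdisj g
        have h3 : valueZ φ₁ φ₂ g = gapZ φ₁ φ₂ g - crossZ φ₁ φ₂ g := rfl
        have h4 := gapZ_nonneg hdisj g
        have h5 : valueZ φ₁ φ₂ f = gapZ φ₁ φ₂ f - crossZ φ₁ φ₂ f := rfl
        omega
      obtain ⟨l, F, hseq, hF0, hfeas, hlen⟩ := ih g hmg
      refine ⟨l + 1, fun k => if k = 0 then f else F (k - 1), ?_, rfl, ?_, ?_⟩
      · intro k hk
        cases k with
        | zero =>
          show AdjSwap f (F 0)
          rw [hF0]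
          exact hadj
        | succ m =>
          show AdjSwap (F m) (F (m + 1))
          exact hseq m (by omega)
      · intro s
        obtain ⟨jj, hj1, hj2⟩ := hfeas s
        refine ⟨jj + 1, by omega, ?_⟩
        show Nat.dist ((F jj).symm (φ₁ s) : ℕ) ((F jj).symm (φ₂ s) : ℕ) = 1
        exact hj2
      · push_cast
        omega

end Main

/-- on a path, for a qubit-routing instance with disjoint pairs, from any
placement `f` there is a feasible swap sequence of length exactly `value f = gap f - cross f`. -/
theorem stmt3 {n : ℕ} {T S : Type*} [DecidableEq T] [Fintype S]
    (φ₁ φ₂ : S → T) (hdisj : DisjPairs φ₁ φ₂) (f : Fin n ≃ T) :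
    ∃ (l : ℕ) (F : ℕ → (Fin n ≃ T)),
      SwapSeq l F ∧ F 0 = f ∧ Feasible φ₁ φ₂ l F ∧ (l : ℤ) = valueZ φ₁ φ₂ f := by
  exact main_aux hdisj ((gapZ φ₁ φ₂ f + valueZ φ₁ φ₂ f).toNat) f le_rfl
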